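/- Let N, R_r, S, K_c, X_t be natural numbers with S < K_c and 1 ≤ K_c, let 𝒟 ⊆ {1,…,N}, and set D₁ = 𝒟 ∩ {S+1,…,N} and D₂ = 𝒟 ∩ {1,…,S}. Assume R_r − S − |D₁| − X_t ≥ 1 and R_r − S − |D₁| − X_t ≤ N − S − |D₁|. Let u : {1,…,N} → ℝ be nonnegative with u(n) ≤ 1/K_c for all n ∈ {1,…,S}∖𝒟, and suppose that for every subset Y ⊆ {S+1,…,N}∖𝒟 with |Y| = R_r − S − |D₁| − X_t one has ∑_{n ∈ ({1,…,S}∖𝒟) ∪ Y} u(n) ≥ 1. Then ∑_{n ∈ {1,…,N}∖𝒟} u(n) ≥ (N − S − |D₁|)/(R_r − S − |D₁| − X_t) − (S − |D₂|)(N − R_r + X_t)/(K_c (R_r − S − |D₁| − X_t)). -/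

import Mathlib

open Finset

/-- Number of `m`-subsets of `A` containing a fixed element `a ∈ A`. -/
lemma aux_count_stmt6 {A : Finset ℕ} {m : ℕ} (hm : 1 ≤ m) {a : ℕ} (ha : a ∈ A) :
    ((A.powersetCard m).filter (fun Y => a ∈ Y)).card = (A.card - 1).choose (m - 1) := by
  rw [← Finset.card_erase_of_mem ha, ← Finset.card_powersetCard (m - 1) (A.erase a)]
  apply Finset.card_bij (fun Y _ => Y.erase a)
  · intro Y hY
    simp only [Finset.mem_filter, Finset.mem_powersetCard] at hY ⊢
    obtain ⟨⟨hsub, hcard⟩, haY⟩ := hY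
    exact ⟨Finset.erase_subset_erase _ hsub, by rw [Finset.card_erase_of_mem haY, hcard]⟩
  · intro Y₁ h₁ Y₂ h₂ he
    simp only [Finset.mem_filter] at h₁ h₂
    rw [← Finset.insert_erase h₁.2, ← Finset.insert_erase h₂.2, he]
  · intro Z hZ
    rw [Finset.mem_powersetCard] at hZ
    obtain ⟨hsub, hcard⟩ := hZ
    have haZ : a ∉ Z := fun hc => (Finset.notMem_erase a A) (hsub hc)
    refine ⟨insert a Z, ?_, ?_⟩
    · simp only [Finset.mem_filter, Finset.mem_powersetCard]
      refine ⟨⟨?_, ?_⟩, Finset.mem_insert_self a Z⟩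
      · intro x hx
        rcases Finset.mem_insert.1 hx with rfl | hx
        · exact ha
        · exact (Finset.erase_subset a A) (hsub hx)
      · rw [Finset.card_insert_of_notMem haZ, hcard]; omega
    · rw [Finset.erase_insert haZ]

set_option maxHeartbeats 1600000 in
/-- Upload-cost converse for the partially storage constrained setting
(`S < K_c`):
`C_u ≥ (N - S - |D₁|)/(R_r - S - |D₁| - X_t) - (S - |D₂|)(N - R_r + X_t)/(K_c (R_r - S - |D₁| - X_t))`. -/
theorem stmt_6 (N R_r S K_c X_t : ℕ) (hSK : S < K_c) (hK : 1 ≤ K_c)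
    (𝒟 : Finset ℕ) (h𝒟 : 𝒟 ⊆ Finset.Icc 1 N)
    (D₁ D₂ : Finset ℕ)
    (hD₁ : D₁ = 𝒟 ∩ Finset.Icc (S + 1) N) (hD₂ : D₂ = 𝒟 ∩ Finset.Icc 1 S)
    (h1 : 1 ≤ (R_r : ℤ) - (S : ℤ) - (D₁.card : ℤ) - (X_t : ℤ))
    (h2 : (R_r : ℤ) - (S : ℤ) - (D₁.card : ℤ) - (X_t : ℤ) ≤
      (N : ℤ) - (S : ℤ) - (D₁.card : ℤ))
    (u : ℕ → ℝ) (hu : ∀ n ∈ Finset.Icc 1 N, 0 ≤ u n)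
    (hcap : ∀ n ∈ Finset.Icc 1 S \ 𝒟, u n ≤ 1 / (K_c : ℝ))
    (h : ∀ Y ⊆ Finset.Icc (S + 1) N \ 𝒟,
      (Y.card : ℤ) = (R_r : ℤ) - (S : ℤ) - (D₁.card : ℤ) - (X_t : ℤ) →
      1 ≤ ∑ n ∈ (Finset.Icc 1 S \ 𝒟) ∪ Y, u n) :
    ((N : ℝ) - S - D₁.card) / ((R_r : ℝ) - S - D₁.card - X_t) -
        ((S : ℝ) - D₂.card) * ((N : ℝ) - R_r + X_t) /
          ((K_c : ℝ) * ((R_r : ℝ) - S - D₁.card - X_t)) ≤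
      ∑ n ∈ Finset.Icc 1 N \ 𝒟, u n := by
  classical
  set A : Finset ℕ := Finset.Icc (S + 1) N \ 𝒟 with hA
  set C : Finset ℕ := Finset.Icc 1 S \ 𝒟 with hC
  set m : ℕ := R_r - (S + D₁.card + X_t) with hm
  have hmZ : (m : ℤ) = (R_r : ℤ) - S - D₁.card - X_t := by
    simp only [hm]; omega
  have hm1 : 1 ≤ m := by omega
  -- cardinalities
  have hD₁sub : D₁ ⊆ Finset.Icc (S + 1) N := hD₁ ▸ Finset.inter_subset_right
  have hD₂sub : D₂ ⊆ Finset.Icc 1 S := hD₂ ▸ Finset.inter_subset_right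
  have hAeq : A = Finset.Icc (S + 1) N \ D₁ := by
    ext n; simp only [hA, hD₁, Finset.mem_sdiff, Finset.mem_inter]; tauto
  have hCeq : C = Finset.Icc 1 S \ D₂ := by
    ext n; simp only [hC, hD₂, Finset.mem_sdiff, Finset.mem_inter]; tauto
  have hAcard : A.card = (N + 1 - (S + 1)) - D₁.card := by
    rw [hAeq, Finset.card_sdiff_of_subset hD₁sub, Nat.card_Icc]
  have hCcard : C.card = (S + 1 - 1) - D₂.card := by
    rw [hCeq, Finset.card_sdiff_of_subset hD₂sub, Nat.card_Icc]
  have hD₁le : D₁.card ≤ N + 1 - (S + 1) := Finset.card_le_card hD₁sub |>.trans (by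
    rw [Nat.card_Icc])
  have hD₂le : D₂.card ≤ S := (Finset.card_le_card hD₂sub).trans (by rw [Nat.card_Icc]; omega)
  have hNge : S + D₁.card + m ≤ N := by
    have := h2; omega
  have hAcard' : A.card = N - S - D₁.card := by omega
  have hmA : m ≤ A.card := by omega
  -- split the total sum
  have hdisj : Disjoint C A := by
    rw [Finset.disjoint_left]
    intro n hn hn'
    simp only [hC, hA, Finset.mem_sdiff, Finset.mem_Icc] at hn hn'
    omega
  have hsplit : Finset.Icc 1 N \ 𝒟 = C ∪ A := by
    ext n
    by_cases hn : n ∈ 𝒟 <;>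
      simp only [hC, hA, Finset.mem_union, Finset.mem_sdiff, Finset.mem_Icc, hn,
        not_true, not_false_iff, and_false, and_true, false_or, or_false,
        false_and, or_self, iff_self] <;> omega
  have huA : ∀ n ∈ A, 0 ≤ u n := by
    intro n hn
    apply hu
    simp only [hA, Finset.mem_sdiff, Finset.mem_Icc] at hn
    simp only [Finset.mem_Icc]; omega
  -- double counting over m-subsets of A
  set P := A.powersetCard m with hP
  have hPcard : P.card = A.card.choose m := Finset.card_powersetCard m A
  have hPpos : 0 < P.card := by rw [hPcard]; exact Nat.choose_pos hmA
  have hswap : ∑ Y ∈ P, ∑ n ∈ Y, u n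
      = ((A.card - 1).choose (m - 1) : ℝ) * ∑ n ∈ A, u n := by
    have step1 : ∀ Y ∈ P, ∑ n ∈ Y, u n = ∑ n ∈ A, if n ∈ Y then u n else 0 := by
      intro Y hY
      rw [Finset.mem_powersetCard] at hY
      rw [Finset.sum_ite_mem, Finset.inter_eq_right.2 hY.1]
    rw [Finset.sum_congr rfl step1, Finset.sum_comm]
    rw [Finset.mul_sum]
    apply Finset.sum_congr rfl
    intro n hn
    rw [← Finset.sum_filter, Finset.sum_const, nsmul_eq_mul, aux_count_stmt6 hm1 hn]
  -- sum the hypothesis over all Y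
  have hone : ∀ Y ∈ P, (1:ℝ) ≤ ∑ n ∈ C, u n + ∑ n ∈ Y, u n := by
    intro Y hY
    rw [Finset.mem_powersetCard] at hY
    have hdYC : Disjoint C Y := hdisj.mono_right hY.1
    have := h Y hY.1 (by rw [hY.2]; exact hmZ)
    rwa [Finset.sum_union hdYC] at this
  have hmain : (P.card : ℝ) ≤ P.card * ∑ n ∈ C, u n
      + ((A.card - 1).choose (m - 1) : ℝ) * ∑ n ∈ A, u n := by
    calc (P.card : ℝ) = ∑ _Y ∈ P, (1:ℝ) := by simp
      _ ≤ ∑ Y ∈ P, (∑ n ∈ C, u n + ∑ n ∈ Y, u n) := Finset.sum_le_sum hone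
      _ = P.card * ∑ n ∈ C, u n + ∑ Y ∈ P, ∑ n ∈ Y, u n := by
          rw [Finset.sum_add_distrib, Finset.sum_const, nsmul_eq_mul]
      _ = _ := by rw [hswap]
  -- choose identity
  have hid : A.card * (A.card - 1).choose (m - 1) = A.card.choose m * m := by
    have hx := Nat.add_one_mul_choose_eq (A.card - 1) (m - 1)
    have ha1 : A.card - 1 + 1 = A.card := by omega
    have hm1' : m - 1 + 1 = m := by omega
    simpa [Nat.succ_eq_add_one, ha1, hm1'] using hx
  set c := ∑ n ∈ C, u n with hc
  set s := ∑ n ∈ A, u n with hs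
  have hs0 : 0 ≤ s := Finset.sum_nonneg huA
  have hchpos : (0:ℝ) < (A.card.choose m : ℝ) := by
    exact_mod_cast Nat.choose_pos hmA
  have ha0 : (0:ℝ) ≤ (A.card : ℝ) := by positivity
  have hidR : (A.card : ℝ) * ((A.card - 1).choose (m - 1) : ℝ)
      = (A.card.choose m : ℝ) * m := by exact_mod_cast hid
  have key : (A.card : ℝ) ≤ A.card * c + m * s := by
    have h3 : (A.card : ℝ) * (A.card.choose m : ℝ)
        ≤ (A.card : ℝ) * ((A.card.choose m : ℝ) * c
          + ((A.card - 1).choose (m - 1) : ℝ) * s) := by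
      apply mul_le_mul_of_nonneg_left _ ha0
      rw [hPcard] at hmain
      exact hmain
    have h4 : (A.card.choose m : ℝ) * (A.card : ℝ)
        ≤ (A.card.choose m : ℝ) * ((A.card : ℝ) * c + m * s) := by nlinarith [h3, hidR]
    exact (mul_le_mul_iff_right₀ hchpos).mp h4
  have hKpos : (0:ℝ) < (K_c : ℝ) := by exact_mod_cast hK
  have hcK : c * K_c ≤ (C.card : ℝ) := by
    have hcle : c ≤ ∑ _n ∈ C, 1 / (K_c : ℝ) := Finset.sum_le_sum (fun n hn => hcap n hn)
    rw [Finset.sum_const, nsmul_eq_mul] at hcle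
    rw [← le_div_iff₀ hKpos]
    calc c ≤ (C.card : ℝ) * (1 / K_c) := hcle
      _ = (C.card : ℝ) / K_c := by ring
  -- cast equalities
  have e1 : ((A.card : ℝ)) = (N:ℝ) - S - D₁.card := by
    have h' : (A.card : ℤ) = (N:ℤ) - S - D₁.card := by omega
    have := congrArg (fun z : ℤ => (z : ℝ)) h'
    push_cast at this; linarith
  have e2 : ((m : ℝ)) = (R_r:ℝ) - S - D₁.card - X_t := by
    have := congrArg (fun z : ℤ => (z : ℝ)) hmZ
    push_cast at this; linarith
  have e3 : ((C.card : ℝ)) = (S:ℝ) - D₂.card := by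
    have h' : (C.card : ℤ) = (S:ℤ) - D₂.card := by omega
    have := congrArg (fun z : ℤ => (z : ℝ)) h'
    push_cast at this; linarith
  have e4 : (N:ℝ) - R_r + X_t = (A.card : ℝ) - m := by
    rw [e1, e2]; ring
  rw [hsplit, Finset.sum_union hdisj, ← hc, ← hs, e4, ← e1, ← e2, ← e3]
  have hm0 : (0:ℝ) < (m : ℝ) := by exact_mod_cast hm1
  have hamR : (m : ℝ) ≤ (A.card : ℝ) := by exact_mod_cast hmA
  have lhs_eq : (A.card:ℝ)/m - (C.card:ℝ)*((A.card:ℝ)-m)/((K_c:ℝ)*m)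
      = ((A.card:ℝ)*K_c - C.card*((A.card:ℝ)-m))/((K_c:ℝ)*m) := by
    field_simp
  rw [lhs_eq, div_le_iff₀ (by positivity)]
  have hck0 : (0:ℝ) ≤ (C.card : ℝ) - c * K_c := by linarith
  nlinarith [mul_le_mul_of_nonneg_left key hKpos.le,
    mul_nonneg (sub_nonneg.2 hamR) hck0]
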